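/- arXiv:0711.3492 — 2 statements merged into one kernel-verified Lean document; each statement's English description precedes it below -/
import Mathlib

section
/- Let G be a finite abelian group and ψ : G → ℝ with ψ(g) = ψ(-g) for all g. Let Q_{g,h} = ψ(h-g), P = exp(Q), and f(g) = P_{0,g}. Then for every character χ of G, the Fourier transform f̌(χ) = ∑_{h∈G} χ(h) f(h) is a nonnegative real number. -/
open scoped ComplexOrder

attribute [local instance] Matrix.linftyOpNormedAddCommGroup Matrix.linftyOpNormedRing
  Matrix.linftyOpNormedAlgebra

/-- For symmetric `ψ : G → ℝ`, with `Q_{g,h} = ψ (h - g)`, `P = exp Q` and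
`f g = P 0 g`, the Fourier transform `f̌(χ) = ∑ h, χ h * f h` is a nonnegative
real number (using the partial order on `ℂ`, in which `0 ≤ z` means `z` is real
and nonnegative). -/
theorem fourier_exp_circulant_nonneg
    {G : Type*} [AddCommGroup G] [Fintype G] [DecidableEq G]
    (ψ : G → ℝ) (hψ : ∀ g : G, ψ g = ψ (-g))
    (Q : Matrix G G ℝ) (hQ : ∀ g h : G, Q g h = ψ (h - g))
    (P : Matrix G G ℝ) (hP : P = NormedSpace.exp Q)
    (f : G → ℝ) (hf : ∀ g : G, f g = P 0 g)
    (χ : AddChar G ℂ) :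
    0 ≤ ∑ h : G, χ h * (f h : ℂ) := by
  set lam : ℂ := ∑ h : G, χ h * (ψ h : ℂ) with hlamdef
  -- lam is real
  have hlam_real : (starRingEnd ℂ) lam = lam := by
    rw [hlamdef, map_sum]
    rw [show ∑ h : G, χ h * (ψ h : ℂ) = ∑ h : G, χ (-h) * (ψ (-h) : ℂ) from
      (Fintype.sum_equiv (Equiv.neg G) _ _ (fun h => by simp)).symm]
    refine Finset.sum_congr rfl fun h _ => ?_
    rw [map_mul, Complex.conj_ofReal, AddChar.map_neg_eq_conj, ← hψ]
  -- Fourier of powers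
  have hpow : ∀ n : ℕ, ∑ h : G, χ h * ((Q ^ n) 0 h : ℂ) = lam ^ n := by
    intro n
    induction n with
    | zero =>
      simp only [pow_zero, Matrix.one_apply]
      rw [Finset.sum_eq_single (0 : G)]
      · simp
      · intro b _ hb; simp [(Ne.symm hb)]
      · simp
    | succ n ih =>
      have : ∀ h : G, (Q ^ (n + 1)) 0 h = ∑ k : G, (Q ^ n) 0 k * Q k h := by
        intro h; rw [pow_succ, Matrix.mul_apply]
      simp_rw [this, Complex.ofReal_sum, Complex.ofReal_mul, Finset.mul_sum]
      rw [Finset.sum_comm]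
      have key : ∀ k : G, ∑ h : G, χ h * (((Q ^ n) 0 k : ℝ) * (Q k h : ℝ) : ℂ) =
          ((Q ^ n) 0 k : ℂ) * χ k * lam := by
        intro k
        rw [hlamdef, Finset.mul_sum]
        refine Fintype.sum_equiv (Equiv.subRight k) _ _ fun x => ?_
        simp only [Equiv.subRight_apply, hQ]
        have hx : χ x = χ k * χ (x - k) := by
          rw [← AddChar.map_add_eq_mul, add_sub_cancel]
        rw [hx]; ring
      calc ∑ k : G, ∑ h : G, χ h * (((Q ^ n) 0 k : ℝ) * (Q k h : ℝ) : ℂ)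
          = ∑ k : G, ((Q ^ n) 0 k : ℂ) * χ k * lam := by
            exact Finset.sum_congr rfl fun k _ => key k
        _ = (∑ k : G, χ k * ((Q ^ n) 0 k : ℂ)) * lam := by
            rw [Finset.sum_mul]; exact Finset.sum_congr rfl fun k _ => by ring
        _ = lam ^ (n + 1) := by rw [ih, pow_succ]
  -- has sum for matrix exponential entries
  have hms : HasSum (fun n : ℕ => (n.factorial⁻¹ : ℝ) • Q ^ n) (NormedSpace.exp Q) :=
    NormedSpace.exp_series_hasSum_exp' Q
  -- sum over h of entrywise series
  have hentry : ∀ h : G, HasSum (fun n : ℕ => χ h * (((n.factorial⁻¹ : ℝ) * (Q ^ n) 0 h : ℝ) : ℂ))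
      (χ h * ((P 0 h : ℝ) : ℂ)) := by
    intro h
    let L : Matrix G G ℝ →ₗ[ℝ] ℝ :=
      { toFun := fun M => M 0 h, map_add' := fun _ _ => rfl, map_smul' := fun _ _ => rfl }
    have h1 : HasSum (fun n : ℕ => L ((n.factorial⁻¹ : ℝ) • Q ^ n)) (L (NormedSpace.exp Q)) :=
      hms.mapL L.toContinuousLinearMap
    have h2 : HasSum (fun n : ℕ => (((n.factorial⁻¹ : ℝ) * (Q ^ n) 0 h : ℝ) : ℂ))
        ((P 0 h : ℂ)) := by
      rw [hP]
      have heq : (fun n : ℕ => (((n.factorial⁻¹ : ℝ) * (Q ^ n) 0 h : ℝ) : ℂ))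
          = fun n : ℕ => Complex.ofRealCLM (L ((n.factorial⁻¹ : ℝ) • Q ^ n)) := by
        funext n
        simp [L, Matrix.smul_apply, smul_eq_mul]
        exact Or.inl rfl
      exact heq ▸ (h1.mapL Complex.ofRealCLM)
    exact h2.mul_left _
  have htotal : HasSum (fun n : ℕ => ∑ h : G, χ h *
      (((n.factorial⁻¹ : ℝ) * (Q ^ n) 0 h : ℝ) : ℂ)) (∑ h : G, χ h * ((P 0 h : ℝ) : ℂ)) :=
    hasSum_sum fun h _ => hentry h
  have hrw : ∀ n : ℕ, ∑ h : G, χ h * (((n.factorial⁻¹ : ℝ) * (Q ^ n) 0 h : ℝ) : ℂ)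
      = (n.factorial⁻¹ : ℂ) • lam ^ n := by
    intro n
    rw [← hpow n, Finset.smul_sum]
    refine Finset.sum_congr rfl fun h _ => ?_
    push_cast
    rw [smul_eq_mul]; ring
  rw [funext hrw] at htotal
  have hexp : HasSum (fun n : ℕ => (n.factorial⁻¹ : ℂ) • lam ^ n) (NormedSpace.exp lam) :=
    NormedSpace.exp_series_hasSum_exp' lam
  have hS : ∑ h : G, χ h * ((P 0 h : ℝ) : ℂ) = NormedSpace.exp lam :=
    htotal.unique hexp
  have : ∑ h : G, χ h * ((f h : ℝ) : ℂ) = NormedSpace.exp lam := by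
    simp_rw [hf]; exact hS
  rw [this]
  -- lam is real, so exp is nonneg
  have him : lam.im = 0 := by
    have := congrArg Complex.im hlam_real
    simp only [Complex.conj_im] at this
    linarith
  have hre : lam = ((lam.re : ℝ) : ℂ) := by
    exact Complex.ext rfl (by simp [him])
  rw [hre, ← Complex.exp_eq_exp_ℂ, ← Complex.ofReal_exp]
  exact Complex.zero_le_real.mpr (Real.exp_nonneg _)
end

section
/- Consider a tree with positive edge weights θ_e and path products F(i,j) = ∏_{e∈p(i,j)} θ_e. Let e be an internal edge with endpoints ν and ν', and choose leaves i, j with ν (but not ν') on the path p(i,j), and leaves i', j' with ν' (but not ν) on p(i',j'). Then (F(i,i')·F(j,j'))/(F(i,j)·F(i',j')) = θ_e². -/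
open SimpleGraph

section TreeAux

variable {V : Type*} {G : SimpleGraph V}

private lemma isPath_append' {u v w : V} {p : G.Walk u v} {q : G.Walk v w}
    (hp : p.IsPath) (hq : q.IsPath)
    (h : ∀ x, x ∈ p.support → x ∈ q.support → x = v) :
    (p.append q).IsPath := by
  rw [Walk.isPath_def, Walk.support_append]
  have hqtail : q.support.tail.Nodup := by
    have := hq.support_nodup
    rw [q.support_eq_cons] at this
    exact this.of_cons
  refine List.Nodup.append hp.support_nodup hqtail ?_
  intro a ha ha'
  have hav : a = v := h a ha (List.mem_of_mem_tail ha')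
  subst hav
  have := hq.support_nodup
  rw [q.support_eq_cons] at this
  exact this.notMem ha'

variable (hG : G.IsTree)

private noncomputable def P (a b : V) : G.Walk a b :=
  (hG.existsUnique_path a b).choose

private lemma P_isPath (a b : V) : (P hG a b).IsPath :=
  (hG.existsUnique_path a b).choose_spec.1

private lemma P_eq {a b : V} (p : G.Walk a b) (hp : p.IsPath) : P hG a b = p :=
  ((hG.existsUnique_path a b).choose_spec.2 p hp).symm

private lemma P_symm (a b : V) : P hG b a = (P hG a b).reverse :=
  P_eq hG _ ((P_isPath hG a b).reverse)

private lemma mem_support_comm {a b x : V} :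
    x ∈ (P hG a b).support ↔ x ∈ (P hG b a).support := by
  rw [P_symm hG a b, Walk.support_reverse, List.mem_reverse]

private lemma P_takeUntil [DecidableEq V] {a b x : V} (h : x ∈ (P hG a b).support) :
    P hG a x = (P hG a b).takeUntil x h :=
  P_eq hG _ ((P_isPath hG a b).takeUntil h)

private lemma P_dropUntil [DecidableEq V] {a b x : V} (h : x ∈ (P hG a b).support) :
    P hG x b = (P hG a b).dropUntil x h :=
  P_eq hG _ ((P_isPath hG a b).dropUntil h)

private lemma support_left [DecidableEq V] {a b x : V} (h : x ∈ (P hG a b).support) :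
    (P hG a x).support ⊆ (P hG a b).support := by
  rw [P_takeUntil hG h]; exact Walk.support_takeUntil_subset _ h

private lemma support_right [DecidableEq V] {a b x : V} (h : x ∈ (P hG a b).support) :
    (P hG x b).support ⊆ (P hG a b).support := by
  rw [P_dropUntil hG h]; exact Walk.support_dropUntil_subset _ h

variable (θ : Sym2 V → ℝ)

private lemma prod_split [DecidableEq V] {a b x : V} (h : x ∈ (P hG a b).support) :
    ((P hG a b).edges.map θ).prod =
      ((P hG a x).edges.map θ).prod * ((P hG x b).edges.map θ).prod := by
  rw [P_takeUntil hG h, P_dropUntil hG h]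
  conv_lhs => rw [← Walk.take_spec (P hG a b) h]
  rw [Walk.edges_append, List.map_append, List.prod_append]

private lemma prod_symm (a b : V) :
    ((P hG b a).edges.map θ).prod = ((P hG a b).edges.map θ).prod := by
  rw [P_symm hG a b, Walk.edges_reverse, List.map_reverse, List.prod_reverse]

/-- Key lemma: the path from `a` to `a'` goes `a → ν → ν' → a'`. -/
private lemma key [DecidableEq V] {ν ν' a b a' b' : V} (hadj : G.Adj ν ν')
    (h1 : ν ∈ (P hG a b).support) (h2 : ν' ∉ (P hG a b).support)
    (h3 : ν' ∈ (P hG a' b').support) (h4 : ν ∉ (P hG a' b').support) :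
    ((P hG a a').edges.map θ).prod =
      ((P hG a ν).edges.map θ).prod * θ s(ν, ν') * ((P hG ν' a').edges.map θ).prod := by
  -- ν ∉ support of P ν' a'
  have hsub3 : (P hG ν' a').support ⊆ (P hG a' b').support := by
    intro x hx
    exact support_left hG h3 ((mem_support_comm hG).2 hx)
  have hν_not : ν ∉ (P hG ν' a').support := fun hx => h4 (hsub3 hx)
  -- the candidate path
  have hq : (Walk.cons hadj (P hG ν' a')).IsPath :=
    ((P_isPath hG ν' a').cons hν_not)
  have hdisj : ∀ x, x ∈ (P hG a ν).support → x ∈ (Walk.cons hadj (P hG ν' a')).support → x = ν := by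
    intro x hx hx'
    rw [Walk.support_cons, List.mem_cons] at hx'
    rcases hx' with rfl | hx'
    · rfl
    · exfalso
      -- x is on both P a ν and P ν' a'; derive a contradiction
      -- ν' ∉ support of P ν x
      have hsub1 : (P hG x ν).support ⊆ (P hG a b).support := fun y hy =>
        support_left hG h1 (support_right hG hx hy)
      have hν'x : ν' ∉ (P hG ν x).support := by
        rw [mem_support_comm hG]
        exact fun hy => h2 (hsub1 hy)
      have hcons : (Walk.cons hadj.symm (P hG ν x)).IsPath :=
        (P_isPath hG ν x).cons hν'x
      have hPx : P hG ν' x = Walk.cons hadj.symm (P hG ν x) := P_eq hG _ hcons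
      have hνmem : ν ∈ (P hG ν' x).support := by
        rw [hPx, Walk.support_cons]
        exact List.mem_cons_of_mem _ (Walk.start_mem_support _)
      exact hν_not (support_left hG hx' hνmem)
  have hw : ((P hG a ν).append (Walk.cons hadj (P hG ν' a'))).IsPath :=
    isPath_append' (P_isPath hG a ν) hq hdisj
  have hPaa' : P hG a a' = (P hG a ν).append (Walk.cons hadj (P hG ν' a')) := P_eq hG _ hw
  rw [hPaa', Walk.edges_append, Walk.edges_cons, List.map_append, List.prod_append,
    List.map_cons, List.prod_cons]
  ring

end TreeAux

/-- Path version of the edge-parameter identity for an internal edge under the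
CFN model: if `e` is the internal edge with endpoints `ν, ν'`, with leaves `i, j`
chosen so that the path from `i` to `j` passes through `ν` but not `ν'`, and
leaves `i', j'` so that the path from `i'` to `j'` passes through `ν'` but not
`ν`, then `(F(i,i')·F(j,j'))/(F(i,j)·F(i',j')) = θ_e²`, where `F(a,b)` is the
product of the weights along the unique path from `a` to `b`. -/
theorem path_epi_internal
    {V : Type*} (G : SimpleGraph V) (hG : G.IsTree)
    (θ : Sym2 V → ℝ) (hθ : ∀ e, 0 < θ e)
    (F : V → V → ℝ)
    (hF : ∀ v w : V, F v w =
      (((hG.existsUnique_path v w).choose.edges).map θ).prod)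
    (ν ν' i j i' j' : V)
    (hadj : G.Adj ν ν')
    (hν_ij : ν ∈ (hG.existsUnique_path i j).choose.support)
    (hν'_ij : ν' ∉ (hG.existsUnique_path i j).choose.support)
    (hν'_i'j' : ν' ∈ (hG.existsUnique_path i' j').choose.support)
    (hν_i'j' : ν ∉ (hG.existsUnique_path i' j').choose.support) :
    F i i' * F j j' / (F i j * F i' j') = θ s(ν, ν') ^ 2 := by
  classical
  have hF' : ∀ a b : V, F a b = ((P hG a b).edges.map θ).prod := hF
  have hpos : ∀ a b : V, 0 < ((P hG a b).edges.map θ).prod := by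
    intro a b
    apply List.prod_pos
    intro x hx
    obtain ⟨e, -, rfl⟩ := List.mem_map.1 hx
    exact hθ e
  -- membership hypotheses in terms of P
  have h1 : ν ∈ (P hG i j).support := hν_ij
  have h2 : ν' ∉ (P hG i j).support := hν'_ij
  have h3 : ν' ∈ (P hG i' j').support := hν'_i'j'
  have h4 : ν ∉ (P hG i' j').support := hν_i'j'
  have h1' : ν ∈ (P hG j i).support := (mem_support_comm hG).1 h1
  have h2' : ν' ∉ (P hG j i).support := fun h => h2 ((mem_support_comm hG).2 h)
  have h3' : ν' ∈ (P hG j' i').support := (mem_support_comm hG).1 h3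
  have h4' : ν ∉ (P hG j' i').support := fun h => h4 ((mem_support_comm hG).2 h)
  have hii' := key hG θ hadj h1 h2 h3 h4
  have hjj' := key hG θ hadj h1' h2' h3' h4'
  have hij := prod_split hG θ h1
  have hi'j' := prod_split hG θ h3
  rw [hF' i i', hF' j j', hF' i j, hF' i' j', hii', hjj', hij, hi'j',
    prod_symm hG θ ν j, prod_symm hG θ ν' i']
  have hne : ((List.map θ (P hG i ν).edges).prod * (List.map θ (P hG ν j).edges).prod *
      ((List.map θ (P hG ν' i').edges).prod * (List.map θ (P hG ν' j').edges).prod)) ≠ 0 :=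
    (mul_pos (mul_pos (hpos i ν) (hpos ν j)) (mul_pos (hpos ν' i') (hpos ν' j'))).ne'
  rw [div_eq_iff hne]
  ring
end
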